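/- Let n ≥ 1, let y : Fin n → ℝ take values in {−1,1}, and let H be a nonempty set of functions Fin n → ℝ taking values in {−1,1}. Let opt = inf over h' ∈ H of the empirical error |{i : h'(i) ≠ y(i)}|/n. Let β ∈ [0,1/2), set γ = (1/2)·(1/2 − β), let ε ∈ (0,1], set ε'' = 2·opt/(1/2−β) + ε, and assume ε'' ≤ 1. Let T be a natural number with T > 2·log(1/ε'')/γ². Suppose we are given hypotheses h¹,…,h^T : Fin n → ℝ with values in {−1,1} and distributions D¹,…,D^T on Fin n such that: (i) D¹ is uniform; (ii) each D^t is ε''-smooth; (iii) (β-weak agnostic learner) for every t, ∑_{i : h^t(i) ≠ y(i)} D^t(i) ≤ (inf over h' ∈ H of ∑_{i : h'(i) ≠ y(i)} D^t(i)) + β; (iv) for every t < T, letting ℓ^t(i) = 1[h^t(i) = y(i)], Z^t = ∑_i D^t(i)·(1−γ)^{ℓ^t(i)}, and D̂^{t+1}(i) = D^t(i)·(1−γ)^{ℓ^t(i)}/Z^t, the distribution D^{t+1} satisfies RE(D^{t+1} ‖ D̂^{t+1}) ≤ RE(D ‖ D̂^{t+1}) for every ε''-smooth distribution D on Fin n.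 Then the cardinality of {i : y(i)·∑_{t=1}^T h^t(i) ≤ 0} is strictly less than (2·opt/(1/2−β) + ε)·n. -/

import Mathlib

/-- `D` is a probability distribution on `Fin n`. -/
def IsDistribution {n : ℕ} (D : Fin n → ℝ) : Prop :=
  (∀ i, 0 ≤ D i) ∧ ∑ i, D i = 1

/-- `D` is `ε`-smooth: every coordinate is at most `1/(ε·n)`. -/
def IsSmooth {n : ℕ} (ε : ℝ) (D : Fin n → ℝ) : Prop :=
  ∀ i, D i ≤ 1 / (ε * n)

/-- Relative entropy `RE(p ‖ q) = ∑ i, p i · log (p i / q i)`, where terms with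
`p i = 0` contribute `0`. -/
noncomputable def RE {n : ℕ} (p q : Fin n → ℝ) : ℝ :=
  ∑ i, if p i = 0 then 0 else p i * Real.log (p i / q i)

lemma re_nonneg {n : ℕ} (P Q : Fin n → ℝ) (hP : IsDistribution P)
    (hQpos : ∀ i, 0 < Q i) (hQsum : ∑ i, Q i ≤ 1) : 0 ≤ RE P Q := by
  have h : ∀ i, P i - Q i ≤ (if P i = 0 then 0 else P i * Real.log (P i / Q i)) := by
    intro i
    by_cases hPi : P i = 0
    · simp [hPi]; linarith [(hQpos i).le]
    · have hp : 0 < P i := lt_of_le_of_ne (hP.1 i) (Ne.symm hPi)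
      rw [if_neg hPi]
      have h2 : Real.log (Q i / P i) ≤ Q i / P i - 1 :=
        Real.log_le_sub_one_of_pos (div_pos (hQpos i) hp)
      have hlog : 1 - Q i / P i ≤ Real.log (P i / Q i) := by
        rw [Real.log_div hp.ne' (hQpos i).ne']
        rw [Real.log_div (hQpos i).ne' hp.ne'] at h2
        linarith
      calc P i - Q i = P i * (1 - Q i / P i) := by field_simp
        _ ≤ P i * Real.log (P i / Q i) := mul_le_mul_of_nonneg_left hlog hp.le
  calc (0:ℝ) = 1 - 1 := by ring
    _ ≤ ∑ i, P i - ∑ i, Q i := by rw [hP.2]; linarith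
    _ = ∑ i, (P i - Q i) := by rw [Finset.sum_sub_distrib]
    _ ≤ RE P Q := Finset.sum_le_sum (fun i _ => h i)

lemma term_ineq (x a q : ℝ) (hx : 0 ≤ x) (ha : 0 < a) (hq : 0 < q) :
    (if x = 0 then 0 else x * Real.log (x / q)) ≤
      a * Real.log (a / q) + (x - a) * (1 + Real.log (a / q)) + (x - a)^2 / a := by
  by_cases h0 : x = 0
  · rw [if_pos h0, h0]
    have hA : ((0:ℝ) - a) ^ 2 / a = a := by rw [div_eq_iff ha.ne']; ring
    have : a * Real.log (a / q) + (0 - a) * (1 + Real.log (a / q)) + a = 0 := by ring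
    linarith [hA ▸ this]
  · have hx' : 0 < x := lt_of_le_of_ne hx (Ne.symm h0)
    have key : Real.log (x/a) ≤ x/a - 1 := Real.log_le_sub_one_of_pos (by positivity)
    have hsplit : Real.log (x/q) = Real.log (x/a) + Real.log (a/q) := by
      rw [Real.log_div hx'.ne' hq.ne', Real.log_div hx'.ne' ha.ne', Real.log_div ha.ne' hq.ne']
      ring
    rw [if_neg h0, hsplit]
    have h1 : x * Real.log (x/a) ≤ x * (x/a - 1) := mul_le_mul_of_nonneg_left key hx
    have h2 : x * (x/a - 1) = (x - a) + (x-a)^2/a := by field_simp; ring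
    have h3 : x * (Real.log (x/a) + Real.log (a/q)) ≤
        (x - a) + (x-a)^2/a + x * Real.log (a/q) := by nlinarith [h1, h2]
    calc x * (Real.log (x/a) + Real.log (a/q))
        ≤ (x - a) + (x-a)^2/a + x * Real.log (a/q) := h3
      _ = a * Real.log (a/q) + (x - a) * (1 + Real.log (a/q)) + (x - a)^2 / a := by ring

lemma minimizer_pos {n : ℕ} (ε'' : ℝ) (hε : 0 < ε'') (hn : 0 < n)
    (q M : Fin n → ℝ) (hq : ∀ i, 0 < q i)
    (hMd : IsDistribution M) (hMs : IsSmooth ε'' M)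
    (hmin : ∀ Dp : Fin n → ℝ, IsDistribution Dp → IsSmooth ε'' Dp → RE M q ≤ RE Dp q) :
    ∀ k, 0 < M k := by
  intro k
  by_contra hk
  have hMk : M k = 0 := le_antisymm (not_lt.mp hk) (hMd.1 k)
  have hcap : 0 < 1 / (ε'' * n) := by positivity
  obtain ⟨j, hj⟩ : ∃ j, 0 < M j := by
    by_contra hall
    push_neg at hall
    have : ∑ i, M i ≤ 0 := Finset.sum_nonpos (fun i _ => hall i)
    rw [hMd.2] at this; linarith
  have hjk : j ≠ k := fun e => by rw [e, hMk] at hj; exact lt_irrefl 0 hj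
  set L : ℝ := Real.log (q j / M j) with hL
  set δ : ℝ := min (M j / 2) (min (1 / (ε'' * n)) (q k * Real.exp (-(L + 1)))) with hδ
  have hδpos : 0 < δ :=
    lt_min (by linarith) (lt_min hcap (mul_pos (hq k) (Real.exp_pos _)))
  have hδMj : δ ≤ M j / 2 := min_le_left _ _
  have hδcap : δ ≤ 1 / (ε'' * n) := le_trans (min_le_right _ _) (min_le_left _ _)
  have hδqk : δ ≤ q k * Real.exp (-(L + 1)) := le_trans (min_le_right _ _) (min_le_right _ _)
  set Dp : Fin n → ℝ := fun i => M i + (if i = k then δ else 0) - (if i = j then δ else 0)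
    with hDp
  have hDpk : Dp k = δ := by simp [hDp, hMk, Ne.symm hjk]
  have hDpj : Dp j = M j - δ := by simp [hDp, hjk]
  have hDpo : ∀ i, i ≠ k → i ≠ j → Dp i = M i := by intro i h1 h2; simp [hDp, h1, h2]
  have hDpd : IsDistribution Dp := by
    constructor
    · intro i
      by_cases h1 : i = k
      · rw [h1, hDpk]; exact hδpos.le
      · by_cases h2 : i = j
        · rw [h2, hDpj]; linarith
        · rw [hDpo i h1 h2]; exact hMd.1 i
    · rw [hDp]
      rw [Finset.sum_sub_distrib, Finset.sum_add_distrib,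
        Finset.sum_ite_eq' Finset.univ k (fun _ => δ),
        Finset.sum_ite_eq' Finset.univ j (fun _ => δ)]
      simp [hMd.2]
  have hDps : IsSmooth ε'' Dp := by
    intro i
    by_cases h1 : i = k
    · rw [h1, hDpk]; exact hδcap
    · by_cases h2 : i = j
      · rw [h2, hDpj]; linarith [hMs j]
      · rw [hDpo i h1 h2]; exact hMs i
  have hMjδ : 0 < M j - δ := by linarith
  have hlt : RE Dp q < RE M q := by
    have hsum : RE Dp q - RE M q =
        ((if Dp k = 0 then 0 else Dp k * Real.log (Dp k / q k))
          - (if M k = 0 then 0 else M k * Real.log (M k / q k)))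
        + ((if Dp j = 0 then 0 else Dp j * Real.log (Dp j / q j))
          - (if M j = 0 then 0 else M j * Real.log (M j / q j))) := by
      rw [RE, RE, ← Finset.sum_sub_distrib]
      rw [← Finset.sum_subset (Finset.subset_univ ({k, j} : Finset (Fin n)))
        (by
          intro i _ hi
          simp only [Finset.mem_insert, Finset.mem_singleton] at hi
          push_neg at hi
          rw [hDpo i hi.1 hi.2]
          ring)]
      rw [Finset.sum_pair (fun e => (hjk e.symm).elim)]
    have e1 : (if Dp k = 0 then (0:ℝ) else Dp k * Real.log (Dp k / q k))
        = δ * Real.log (δ / q k) := by rw [hDpk, if_neg hδpos.ne']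
    have e2 : (if M k = 0 then (0:ℝ) else M k * Real.log (M k / q k)) = 0 := by
      rw [if_pos hMk]
    have e3 : (if Dp j = 0 then (0:ℝ) else Dp j * Real.log (Dp j / q j))
        = (M j - δ) * Real.log ((M j - δ) / q j) := by rw [hDpj, if_neg hMjδ.ne']
    have e4 : (if M j = 0 then (0:ℝ) else M j * Real.log (M j / q j))
        = M j * Real.log (M j / q j) := by rw [if_neg hj.ne']
    have hlogflip : L = - Real.log (M j / q j) := by
      rw [hL, ← Real.log_inv, inv_div]
    have hmono : Real.log ((M j - δ) / q j) ≤ Real.log (M j / q j) :=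
      Real.log_le_log (div_pos hMjδ (hq j)) (by gcongr <;> linarith [hq j])
    have bj : (M j - δ) * Real.log ((M j - δ) / q j) - M j * Real.log (M j / q j)
        ≤ δ * L := by
      have h6 := mul_le_mul_of_nonneg_left hmono hMjδ.le
      have h7 : (M j - δ) * Real.log (M j / q j) - M j * Real.log (M j / q j)
          = δ * L := by rw [hlogflip]; ring
      linarith
    have bk : δ * Real.log (δ / q k) ≤ -(δ * L) - δ := by
      have h5 : Real.log (δ / q k) ≤ -(L + 1) := by
        rw [Real.log_div hδpos.ne' (hq k).ne']
        have h8 := Real.log_le_log hδpos hδqk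
        rw [Real.log_mul (hq k).ne' (Real.exp_pos _).ne', Real.log_exp] at h8
        linarith
      have := mul_le_mul_of_nonneg_left h5 hδpos.le
      linarith [this]
    have : RE Dp q - RE M q ≤ -δ := by
      rw [hsum, e1, e2, e3, e4]
      linarith
    linarith
  exact absurd (hmin Dp hDpd hDps) (not_le.mpr hlt)

lemma re_smooth_pythagorean {n : ℕ} (ε'' : ℝ) (q M P : Fin n → ℝ)
    (hq : ∀ i, 0 < q i) (hqsum : ∑ i, q i ≤ 1)
    (hM : ∀ i, 0 < M i) (hMd : IsDistribution M) (hMs : IsSmooth ε'' M)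
    (hPd : IsDistribution P) (hPs : IsSmooth ε'' P)
    (hmin : ∀ Dp : Fin n → ℝ, IsDistribution Dp → IsSmooth ε'' Dp → RE M q ≤ RE Dp q) :
    RE P M ≤ RE P q := by
  set S : ℝ := ∑ i, (P i - M i) * Real.log (M i / q i) with hS
  set C : ℝ := ∑ i, (P i - M i)^2 / M i with hC
  have hC0 : 0 ≤ C := Finset.sum_nonneg (fun i _ => div_nonneg (sq_nonneg _) (hM i).le)
  have hREMq : RE M q = ∑ i, M i * Real.log (M i / q i) := by
    apply Finset.sum_congr rfl
    intro i _
    rw [if_neg (hM i).ne']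
  -- step 1 : for all small positive lambda, 0 ≤ λ S + λ² C
  have step1 : ∀ lam : ℝ, 0 < lam → lam ≤ 1 → 0 ≤ lam * S + lam^2 * C := by
    intro lam hl0 hl1
    set x : Fin n → ℝ := fun i => (1 - lam) * M i + lam * P i with hx
    have hxnn : ∀ i, 0 ≤ x i := fun i => by
      have := hMd.1 i; have := hPd.1 i; rw [hx]; dsimp only; nlinarith
    have hxd : IsDistribution x := by
      refine ⟨hxnn, ?_⟩
      rw [hx]
      rw [Finset.sum_add_distrib, ← Finset.mul_sum, ← Finset.mul_sum, hMd.2, hPd.2]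
      ring
    have hxs : IsSmooth ε'' x := by
      intro i
      have := hMs i; have := hPs i
      rw [hx]; dsimp only; nlinarith
    have hb : RE x q ≤ RE M q + lam * S + lam^2 * C := by
      have : RE x q ≤ ∑ i, (M i * Real.log (M i / q i)
          + (x i - M i) * (1 + Real.log (M i / q i)) + (x i - M i)^2 / M i) :=
        Finset.sum_le_sum (fun i _ => term_ineq (x i) (M i) (q i) (hxnn i) (hM i) (hq i))
      have hxM : ∀ i, x i - M i = lam * (P i - M i) := by intro i; rw [hx]; dsimp only; ring
      have e : ∑ i, (M i * Real.log (M i / q i)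
          + (x i - M i) * (1 + Real.log (M i / q i)) + (x i - M i)^2 / M i)
          = RE M q + (lam * (∑ i, (P i - M i)) + lam * S + lam^2 * C) := by
        rw [hREMq, hS, hC]
        rw [Finset.mul_sum, Finset.mul_sum, Finset.mul_sum]
        rw [← Finset.sum_add_distrib, ← Finset.sum_add_distrib, ← Finset.sum_add_distrib]
        apply Finset.sum_congr rfl
        intro i _
        rw [hxM i]
        have hMi := (hM i).ne'
        field_simp
        ring
      have hsum0 : ∑ i, (P i - M i) = 0 := by
        rw [Finset.sum_sub_distrib, hMd.2, hPd.2]; ring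
      rw [e, hsum0] at this
      simp only [mul_zero, zero_add] at this
      linarith
    have := hmin x hxd hxs
    linarith
  -- step 2 : S ≥ 0
  have hS0 : 0 ≤ S := by
    by_contra hneg
    push_neg at hneg
    set lam : ℝ := min 1 (-S / (2 * (C + 1))) with hlam
    have hl0 : 0 < lam := lt_min one_pos (div_pos (by linarith) (by linarith))
    have hl1 : lam ≤ 1 := min_le_left _ _
    have h1 := step1 lam hl0 hl1
    have h2 : 0 ≤ S + lam * C := by
      have : lam * (S + lam * C) = lam * S + lam^2 * C := by ring
      nlinarith
    have h3 : lam ≤ -S / (2 * (C + 1)) := min_le_right _ _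
    have h4 : lam * C ≤ (-S / (2 * (C + 1))) * C := mul_le_mul_of_nonneg_right h3 hC0
    have h5 : (-S / (2 * (C + 1))) * C ≤ -S / 2 := by
      rw [div_mul_eq_mul_div, div_le_div_iff₀ (by positivity) (by norm_num)]
      nlinarith
    linarith
  -- step 3 : RE M q ≥ 0
  have hMq0 : 0 ≤ RE M q := re_nonneg M q hMd hq hqsum
  -- step 4 : conclude
  have hdiff : RE P q - RE P M = ∑ i, P i * Real.log (M i / q i) := by
    rw [RE, RE, ← Finset.sum_sub_distrib]
    apply Finset.sum_congr rfl
    intro i _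
    by_cases hPi : P i = 0
    · rw [if_pos hPi, if_pos hPi, hPi]; ring
    · have hp : 0 < P i := lt_of_le_of_ne (hPd.1 i) (Ne.symm hPi)
      rw [if_neg hPi, if_neg hPi]
      rw [Real.log_div hp.ne' (hq i).ne', Real.log_div hp.ne' (hM i).ne',
        Real.log_div (hM i).ne' (hq i).ne']
      ring
  have hfin : ∑ i, P i * Real.log (M i / q i) = S + RE M q := by
    rw [hS, hREMq, ← Finset.sum_add_distrib]
    apply Finset.sum_congr rfl
    intro i _
    ring
  have : RE P q - RE P M = S + RE M q := hdiff.trans hfin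
  linarith


set_option maxHeartbeats 4000000 in
/-- Theorem 2: the smooth boosting algorithm with a β-weak agnostic learner
achieves error rate `2·err_S(H)/(1/2-β) + ε` on the sample. -/
theorem smooth_boosting_agnostic
    (n : ℕ) (hn : 1 ≤ n)
    (y : Fin n → ℝ) (hy : ∀ i, y i = -1 ∨ y i = 1)
    (H : Set (Fin n → ℝ)) (hHne : H.Nonempty)
    (hHval : ∀ h' ∈ H, ∀ i, h' i = -1 ∨ h' i = 1)
    (opt : ℝ)
    (hopt : opt = sInf ((fun h' : Fin n → ℝ =>
      ((Finset.univ.filter (fun i => h' i ≠ y i)).card : ℝ) / n) '' H))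
    (β : ℝ) (hβ0 : 0 ≤ β) (hβ : β < 1 / 2)
    (γ : ℝ) (hγ : γ = (1 / 2) * (1 / 2 - β))
    (ε : ℝ) (hε : 0 < ε) (hε1 : ε ≤ 1)
    (ε'' : ℝ) (hε'' : ε'' = 2 * opt / (1 / 2 - β) + ε) (hε''1 : ε'' ≤ 1)
    (T : ℕ) (hT : (T : ℝ) > 2 * Real.log (1 / ε'') / γ ^ 2)
    (h : ℕ → Fin n → ℝ) (hh : ∀ t < T, ∀ i, h t i = -1 ∨ h t i = 1)
    (D : ℕ → Fin n → ℝ)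
    (hDdist : ∀ t < T, IsDistribution (D t))
    -- (i) the first distribution is uniform
    (hD0 : ∀ i, D 0 i = 1 / n)
    -- (ii) each distribution is ε''-smooth
    (hDsmooth : ∀ t < T, IsSmooth ε'' (D t))
    -- (iii) β-weak agnostic learner
    (hweak : ∀ t < T,
      ∑ i ∈ Finset.univ.filter (fun i => h t i ≠ y i), D t i ≤
        sInf ((fun h' : Fin n → ℝ =>
          ∑ i ∈ Finset.univ.filter (fun i => h' i ≠ y i), D t i) '' H) + β)
    -- (iv) multiplicative update followed by relative-entropy projection onto
    -- the set of ε''-smooth distributions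
    (hupdate : ∀ t, t + 1 < T →
      ∀ Dp : Fin n → ℝ, IsDistribution Dp → IsSmooth ε'' Dp →
        RE (D (t + 1))
            (fun i => D t i * (if h t i = y i then 1 - γ else 1) /
              (∑ j, D t j * (if h t j = y j then 1 - γ else 1))) ≤
          RE Dp
            (fun i => D t i * (if h t i = y i then 1 - γ else 1) /
              (∑ j, D t j * (if h t j = y j then 1 - γ else 1)))) :
    ((Finset.univ.filter
        (fun i : Fin n => y i * ∑ t ∈ Finset.range T, h t i ≤ 0)).card : ℝ) <
      (2 * opt / (1 / 2 - β) + ε) * n := by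
  have hnR : (0:ℝ) < n := by exact_mod_cast Nat.lt_of_lt_of_le Nat.zero_lt_one hn
  have hβ2 : (0:ℝ) < 1/2 - β := by linarith
  have hγ0 : 0 < γ := by rw [hγ]; linarith
  have hγ4 : γ ≤ 1/4 := by rw [hγ]; linarith
  have hγ1 : γ < 1 := by linarith
  have h1γ : (0:ℝ) < 1 - γ := by linarith
  have hopt0 : 0 ≤ opt := by
    rw [hopt]
    apply Real.sInf_nonneg
    rintro v ⟨h', _, rfl⟩
    positivity
  have hε''0 : 0 < ε'' := by
    rw [hε'']
    have : 0 ≤ 2 * opt / (1/2 - β) := by positivity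
    linarith
  have hloge : 0 ≤ Real.log (1/ε'') := by
    apply Real.log_nonneg
    rw [le_div_iff₀ hε''0]
    linarith
  have hTγ : 2 * Real.log (1/ε'') < T * γ^2 := by
    rw [gt_iff_lt, div_lt_iff₀ (by positivity)] at hT
    linarith
  have hT1 : 1 ≤ T := by
    by_contra hT0
    push_neg at hT0
    interval_cases T
    push_cast at hTγ
    nlinarith
  by_contra hcon
  push_neg at hcon
  rw [← hε''] at hcon
  set B := Finset.univ.filter
    (fun i : Fin n => y i * ∑ t ∈ Finset.range T, h t i ≤ 0) with hB
  set b : ℝ := (B.card : ℝ) with hbdef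
  have hbn : ε'' * n ≤ b := hcon
  have hb0 : 0 < b := lt_of_lt_of_le (by positivity) hbn
  set Dstar : Fin n → ℝ := fun i => if i ∈ B then 1/b else 0 with hDstar
  have hDstarnn : ∀ i, 0 ≤ Dstar i := by
    intro i; rw [hDstar]; dsimp only; split
    · positivity
    · exact le_rfl
  have hDstarsum : ∑ i, Dstar i = 1 := by
    rw [hDstar]
    rw [Finset.sum_ite_mem]
    rw [Finset.univ_inter, Finset.sum_const, nsmul_eq_mul]
    rw [← hbdef]
    field_simp
  have hDstard : IsDistribution Dstar := ⟨hDstarnn, hDstarsum⟩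
  have hDstars : IsSmooth ε'' Dstar := by
    intro i
    have hcap : 0 < 1 / (ε'' * n) := by positivity
    rw [hDstar]; dsimp only; split
    · rw [div_le_div_iff₀ hb0 (by positivity)]
      nlinarith
    · exact hcap.le
  -- error of weak hypotheses
  have herr : ∀ t < T,
      ∑ i ∈ Finset.univ.filter (fun i => h t i ≠ y i), D t i ≤ 1/2 - γ := by
    intro t ht
    have h1 := hweak t ht
    have hDnn := (hDdist t ht).1
    have hbdd : BddBelow ((fun h' : Fin n → ℝ =>
        ∑ i ∈ Finset.univ.filter (fun i => h' i ≠ y i), D t i) '' H) := by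
      refine ⟨0, ?_⟩
      rintro v ⟨h', _, rfl⟩
      exact Finset.sum_nonneg (fun i _ => hDnn i)
    have h2 : sInf ((fun h' : Fin n → ℝ =>
        ∑ i ∈ Finset.univ.filter (fun i => h' i ≠ y i), D t i) '' H) ≤ opt / ε'' := by
      rw [le_div_iff₀ hε''0, hopt]
      apply le_csInf (hHne.image _)
      rintro v ⟨h', hm, rfl⟩
      dsimp only
      have i1 : sInf ((fun h' : Fin n → ℝ =>
          ∑ i ∈ Finset.univ.filter (fun i => h' i ≠ y i), D t i) '' H) ≤
          ∑ i ∈ Finset.univ.filter (fun i => h' i ≠ y i), D t i :=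
        csInf_le hbdd ⟨h', hm, rfl⟩
      have i2 : ∑ i ∈ Finset.univ.filter (fun i => h' i ≠ y i), D t i ≤
          ((Finset.univ.filter (fun i => h' i ≠ y i)).card : ℝ) * (1/(ε''*n)) := by
        calc ∑ i ∈ Finset.univ.filter (fun i => h' i ≠ y i), D t i
            ≤ ∑ _i ∈ Finset.univ.filter (fun i => h' i ≠ y i), 1/(ε''*n) :=
              Finset.sum_le_sum (fun i _ => hDsmooth t ht i)
          _ = ((Finset.univ.filter (fun i => h' i ≠ y i)).card : ℝ) * (1/(ε''*n)) := by
              rw [Finset.sum_const, nsmul_eq_mul]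
      have i4 : ((Finset.univ.filter (fun i => h' i ≠ y i)).card : ℝ) * (1/(ε''*n))
          = (((Finset.univ.filter (fun i => h' i ≠ y i)).card : ℝ)/n)/ε'' := by
        field_simp
      have i3 : sInf ((fun h' : Fin n → ℝ =>
          ∑ i ∈ Finset.univ.filter (fun i => h' i ≠ y i), D t i) '' H) ≤
          (((Finset.univ.filter (fun i => h' i ≠ y i)).card : ℝ)/n)/ε'' := by
        rw [← i4]; linarith
      calc sInf ((fun h' : Fin n → ℝ =>
          ∑ i ∈ Finset.univ.filter (fun i => h' i ≠ y i), D t i) '' H) * ε''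
          ≤ ((((Finset.univ.filter (fun i => h' i ≠ y i)).card : ℝ)/n)/ε'') * ε'' :=
            mul_le_mul_of_nonneg_right i3 hε''0.le
        _ = ((Finset.univ.filter (fun i => h' i ≠ y i)).card : ℝ)/n :=
            div_mul_cancel₀ _ hε''0.ne'
    have h3 : opt / ε'' ≤ γ := by
      rw [div_le_iff₀ hε''0]
      have key : 2*opt/(1/2-β) * (1/2-β) = 2*opt := div_mul_cancel₀ _ (ne_of_gt hβ2)
      rw [hγ, hε'']
      nlinarith [key, mul_pos hβ2 hε]
    linarith
  -- split of mass into correct / incorrect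
  have hsplit : ∀ t, t < T →
      (∑ i ∈ Finset.univ.filter (fun i => h t i = y i), D t i)
      + (∑ i ∈ Finset.univ.filter (fun i => h t i ≠ y i), D t i) = 1 := by
    intro t ht
    have hs := Finset.sum_filter_add_sum_filter_not Finset.univ
      (fun i => h t i = y i) (D t)
    rw [(hDdist t ht).2] at hs
    rw [← hs]
  have herr0 : ∀ t, t < T →
      0 ≤ ∑ i ∈ Finset.univ.filter (fun i => h t i ≠ y i), D t i := by
    intro t ht
    exact Finset.sum_nonneg (fun i _ => (hDdist t ht).1 i)
  have hcorr : ∀ t, t < T →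
      1/2 + γ ≤ ∑ i ∈ Finset.univ.filter (fun i => h t i = y i), D t i := by
    intro t ht
    have := herr t ht
    have := hsplit t ht
    linarith
  have hcorr1 : ∀ t, t < T →
      (∑ i ∈ Finset.univ.filter (fun i => h t i = y i), D t i) ≤ 1 := by
    intro t ht
    have := herr0 t ht
    have := hsplit t ht
    linarith
  have hZeq : ∀ t, t < T →
      (∑ j, D t j * (if h t j = y j then 1 - γ else 1))
        = 1 - γ * ∑ i ∈ Finset.univ.filter (fun i => h t i = y i), D t i := by
    intro t ht
    have e1 : (∑ j, D t j * (if h t j = y j then 1 - γ else 1))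
        = ∑ j, (if h t j = y j then D t j * (1 - γ) else D t j * 1) := by
      apply Finset.sum_congr rfl
      intro j _
      rw [mul_ite]
    rw [e1, Finset.sum_ite]
    have e2 : ∑ i ∈ Finset.univ.filter (fun i => h t i = y i), D t i * (1 - γ)
        = (1 - γ) * ∑ i ∈ Finset.univ.filter (fun i => h t i = y i), D t i := by
      rw [← Finset.sum_mul, mul_comm]
    have e3 : ∑ i ∈ Finset.univ.filter (fun i => ¬ h t i = y i), D t i * 1
        = ∑ i ∈ Finset.univ.filter (fun i => h t i ≠ y i), D t i := by
      apply Finset.sum_congr rfl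
      intro i _
      rw [mul_one]
    rw [e2, e3]
    have := hsplit t ht
    linarith
  have hZpos : ∀ t, t < T →
      0 < ∑ j, D t j * (if h t j = y j then 1 - γ else 1) := by
    intro t ht
    rw [hZeq t ht]
    nlinarith [hcorr1 t ht, hcorr t ht]
  have hZub : ∀ t, t < T →
      (∑ j, D t j * (if h t j = y j then 1 - γ else 1)) ≤ 1 - γ * (1/2 + γ) := by
    intro t ht
    rw [hZeq t ht]
    nlinarith [hcorr t ht]
  -- full support of each D t
  have hpos : ∀ t, t < T → ∀ i, 0 < D t i := by
    intro t
    induction t with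
    | zero =>
      intro _ i
      rw [hD0]
      positivity
    | succ s ih =>
      intro hsT i
      have hsT' : s < T := Nat.lt_of_succ_lt hsT
      have hqpos : ∀ i, 0 < D s i * (if h s i = y i then 1 - γ else 1) /
          (∑ j, D s j * (if h s j = y j then 1 - γ else 1)) := by
        intro i
        apply div_pos _ (hZpos s hsT')
        apply mul_pos (ih hsT' i)
        split <;> linarith
      exact minimizer_pos ε'' hε''0 (Nat.lt_of_lt_of_le Nat.zero_lt_one hn)
        _ (D (s+1)) hqpos (hDdist _ hsT) (hDsmooth _ hsT) (hupdate s hsT) i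
  -- positivity and normalization of the updated (pre-projection) distributions
  have hqpos : ∀ t, t < T → ∀ i, 0 < D t i * (if h t i = y i then 1 - γ else 1) /
      (∑ j, D t j * (if h t j = y j then 1 - γ else 1)) := by
    intro t ht i
    apply div_pos _ (hZpos t ht)
    apply mul_pos (hpos t ht i)
    split <;> linarith
  have hqsum : ∀ t, t < T → (∑ i, D t i * (if h t i = y i then 1 - γ else 1) /
      (∑ j, D t j * (if h t j = y j then 1 - γ else 1))) = 1 := by
    intro t ht
    rw [← Finset.sum_div, div_self (hZpos t ht).ne']
  -- the relative-entropy identity for the multiplicative update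
  have hident : ∀ t, t < T →
      RE Dstar (fun i => D t i * (if h t i = y i then 1 - γ else 1) /
          (∑ j, D t j * (if h t j = y j then 1 - γ else 1)))
        = RE Dstar (D t)
          + Real.log (∑ j, D t j * (if h t j = y j then 1 - γ else 1))
          - Real.log (1-γ) * (∑ i, Dstar i * (if h t i = y i then 1 else 0)) := by
    intro t ht
    have hZp := hZpos t ht
    have hterm : ∀ i : Fin n,
        (if Dstar i = 0 then (0:ℝ) else Dstar i * Real.log (Dstar i /
            (D t i * (if h t i = y i then 1 - γ else 1) /
              (∑ j, D t j * (if h t j = y j then 1 - γ else 1)))))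
        = (if Dstar i = 0 then 0 else Dstar i * Real.log (Dstar i / D t i))
          + Dstar i * Real.log (∑ j, D t j * (if h t j = y j then 1 - γ else 1))
          - Dstar i * (if h t i = y i then Real.log (1-γ) else 0) := by
      intro i
      by_cases hd : Dstar i = 0
      · rw [if_pos hd, if_pos hd, hd]
        simp
      · rw [if_neg hd, if_neg hd]
        have hds : 0 < Dstar i := lt_of_le_of_ne (hDstarnn i) (Ne.symm hd)
        have hDt := hpos t ht i
        by_cases hhy : h t i = y i
        · rw [if_pos hhy, if_pos hhy]
          have hnum : 0 < D t i * (1-γ) := mul_pos hDt h1γ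
          rw [Real.log_div hds.ne' (div_pos hnum hZp).ne',
            Real.log_div hnum.ne' hZp.ne', Real.log_mul hDt.ne' h1γ.ne',
            Real.log_div hds.ne' hDt.ne']
          ring
        · rw [if_neg hhy, if_neg hhy, mul_one]
          rw [Real.log_div hds.ne' (div_pos hDt hZp).ne',
            Real.log_div hDt.ne' hZp.ne', Real.log_div hds.ne' hDt.ne']
          ring
    rw [RE, RE, Finset.sum_congr rfl (fun i _ => hterm i)]
    have hsplitsum : ∑ i, ((if Dstar i = 0 then (0:ℝ) else Dstar i * Real.log (Dstar i / D t i))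
          + Dstar i * Real.log (∑ j, D t j * (if h t j = y j then 1 - γ else 1))
          - Dstar i * (if h t i = y i then Real.log (1-γ) else 0))
        = (∑ i, if Dstar i = 0 then (0:ℝ) else Dstar i * Real.log (Dstar i / D t i))
          + (∑ i, Dstar i) * Real.log (∑ j, D t j * (if h t j = y j then 1 - γ else 1))
          - ∑ i, Dstar i * (if h t i = y i then Real.log (1-γ) else 0) := by
      rw [Finset.sum_sub_distrib, Finset.sum_add_distrib, Finset.sum_mul]
    rw [hsplitsum, hDstarsum, one_mul]
    have hlast : ∑ i, Dstar i * (if h t i = y i then Real.log (1-γ) else 0)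
        = Real.log (1-γ) * (∑ i, Dstar i * (if h t i = y i then 1 else 0)) := by
      rw [Finset.mul_sum]
      apply Finset.sum_congr rfl
      intro i _
      split <;> ring
    rw [hlast]
  -- main potential induction
  have hkey : ∀ t, t < T → RE Dstar (D t) ≤ Real.log (n / b)
      + ∑ s ∈ Finset.range t,
        (Real.log (∑ j, D s j * (if h s j = y j then 1 - γ else 1))
          - Real.log (1-γ) * (∑ i, Dstar i * (if h s i = y i then 1 else 0))) := by
    intro t
    induction t with
    | zero =>
      intro _
      rw [Finset.range_zero, Finset.sum_empty, add_zero]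
      have hinit : RE Dstar (D 0) = Real.log ((n : ℝ) / b) := by
        rw [RE]
        have hterm0 : ∀ i : Fin n, (if Dstar i = 0 then (0:ℝ)
            else Dstar i * Real.log (Dstar i / D 0 i))
            = if i ∈ B then (1/b) * Real.log ((n:ℝ)/b) else 0 := by
          intro i
          by_cases hi : i ∈ B
          · rw [if_pos hi]
            have hDsi : Dstar i = 1/b := by rw [hDstar]; exact if_pos hi
            have hb' : (1:ℝ)/b ≠ 0 := one_div_ne_zero hb0.ne'
            rw [if_neg (by rw [hDsi]; exact hb'), hDsi, hD0 i]
            have : (1/b)/(1/(n:ℝ)) = (n:ℝ)/b := by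
              field_simp
            rw [this]
          · rw [if_neg hi]
            have hDsi : Dstar i = 0 := by rw [hDstar]; exact if_neg hi
            rw [if_pos hDsi]
        rw [Finset.sum_congr rfl (fun i _ => hterm0 i), Finset.sum_ite_mem,
          Finset.univ_inter, Finset.sum_const, nsmul_eq_mul, ← hbdef]
        field_simp
      rw [hinit]
    | succ s ih =>
      intro hsT
      have hsT' : s < T := Nat.lt_of_succ_lt hsT
      have hihs := ih hsT'
      have hpy : RE Dstar (D (s+1)) ≤
          RE Dstar (fun i => D s i * (if h s i = y i then 1 - γ else 1) /
            (∑ j, D s j * (if h s j = y j then 1 - γ else 1))) :=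
        re_smooth_pythagorean ε'' _ (D (s+1)) Dstar (hqpos s hsT') (hqsum s hsT').le
          (hpos (s+1) hsT) (hDdist _ hsT) (hDsmooth _ hsT) hDstard hDstars
          (hupdate s hsT)
      rw [hident s hsT'] at hpy
      rw [Finset.sum_range_succ]
      linarith
  -- the final round
  have hTT : T - 1 < T := Nat.sub_lt (Nat.lt_of_lt_of_le Nat.zero_lt_one hT1) Nat.zero_lt_one
  have hTsucc : T - 1 + 1 = T := Nat.sub_add_cancel hT1
  have hfin0 : 0 ≤ RE Dstar (fun i => D (T-1) i * (if h (T-1) i = y i then 1 - γ else 1) /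
      (∑ j, D (T-1) j * (if h (T-1) j = y j then 1 - γ else 1))) :=
    re_nonneg _ _ hDstard (hqpos (T-1) hTT) (hqsum (T-1) hTT).le
  rw [hident (T-1) hTT] at hfin0
  have hkeyT := hkey (T-1) hTT
  have htele : 0 ≤ Real.log ((n:ℝ) / b)
      + ∑ s ∈ Finset.range T,
        (Real.log (∑ j, D s j * (if h s j = y j then 1 - γ else 1))
          - Real.log (1-γ) * (∑ i, Dstar i * (if h s i = y i then 1 else 0))) := by
    rw [← hTsucc, Finset.sum_range_succ]
    linarith
  -- bound the sum of log Z terms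
  have hlogZ : ∀ s ∈ Finset.range T,
      Real.log (∑ j, D s j * (if h s j = y j then 1 - γ else 1))
        ≤ -(γ * (1/2 + γ)) := by
    intro s hs
    have hsT := Finset.mem_range.mp hs
    have := Real.log_le_sub_one_of_pos (hZpos s hsT)
    have := hZub s hsT
    linarith
  have hsumlogZ : ∑ s ∈ Finset.range T,
      Real.log (∑ j, D s j * (if h s j = y j then 1 - γ else 1))
        ≤ (T:ℝ) * (-(γ * (1/2 + γ))) := by
    calc ∑ s ∈ Finset.range T, Real.log (∑ j, D s j * (if h s j = y j then 1 - γ else 1))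
        ≤ ∑ _s ∈ Finset.range T, -(γ * (1/2 + γ)) := Finset.sum_le_sum hlogZ
      _ = (T:ℝ) * (-(γ * (1/2 + γ))) := by
          rw [Finset.sum_const, Finset.card_range, nsmul_eq_mul]
  -- margin bound : each i in B is correct in at most half the rounds
  have hm : ∀ i ∈ B, 2 * (((Finset.range T).filter (fun t => h t i = y i)).card : ℝ)
      ≤ (T : ℝ) := by
    intro i hi
    have hiB : y i * ∑ t ∈ Finset.range T, h t i ≤ 0 := by
      have := Finset.mem_filter.mp (hB ▸ hi)
      exact this.2
    have e : y i * ∑ t ∈ Finset.range T, h t i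
        = ∑ t ∈ Finset.range T, (if h t i = y i then (1:ℝ) else -1) := by
      rw [Finset.mul_sum]
      apply Finset.sum_congr rfl
      intro t htm
      have htT := Finset.mem_range.mp htm
      rcases hy i with hy1 | hy1 <;> rcases hh t htT i with hh1 | hh1 <;>
        rw [hy1, hh1] <;> norm_num
    have hcards := Finset.card_filter_add_card_filter_not
      (s := Finset.range T) (p := fun t => h t i = y i)
    have hc' : (((Finset.range T).filter (fun t => h t i = y i)).card : ℝ)
        + (((Finset.range T).filter (fun t => ¬ h t i = y i)).card : ℝ) = T := by
      rw_mod_cast [hcards, Finset.card_range]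
    have e2 : ∑ t ∈ Finset.range T, (if h t i = y i then (1:ℝ) else -1)
        = 2 * (((Finset.range T).filter (fun t => h t i = y i)).card : ℝ) - T := by
      rw [Finset.sum_ite, Finset.sum_const, Finset.sum_const, nsmul_eq_mul,
        nsmul_eq_mul]
      linarith [hc']
    rw [e, e2] at hiB
    linarith
  -- total correct mass over all rounds is at most T/2
  have hcsum : ∑ s ∈ Finset.range T, (∑ i, Dstar i * (if h s i = y i then (1:ℝ) else 0))
      ≤ (T:ℝ)/2 := by
    rw [Finset.sum_comm]
    have e : ∀ i : Fin n, ∑ s ∈ Finset.range T, Dstar i * (if h s i = y i then (1:ℝ) else 0)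
        = Dstar i * (((Finset.range T).filter (fun t => h t i = y i)).card : ℝ) := by
      intro i
      rw [← Finset.mul_sum, Finset.sum_boole]
    calc ∑ i : Fin n, ∑ s ∈ Finset.range T, Dstar i * (if h s i = y i then (1:ℝ) else 0)
        = ∑ i : Fin n, Dstar i * (((Finset.range T).filter (fun t => h t i = y i)).card : ℝ) :=
          Finset.sum_congr rfl (fun i _ => e i)
      _ ≤ ∑ i : Fin n, Dstar i * ((T:ℝ)/2) := by
          apply Finset.sum_le_sum
          intro i _
          by_cases hi : i ∈ B
          · exact mul_le_mul_of_nonneg_left (by linarith [hm i hi]) (hDstarnn i)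
          · have hDsi : Dstar i = 0 := by rw [hDstar]; exact if_neg hi
            rw [hDsi]
            simp
      _ = (T:ℝ)/2 := by rw [← Finset.sum_mul, hDstarsum, one_mul]
  -- each per-round correct mass is nonnegative
  have hcnn : ∀ s ∈ Finset.range T,
      0 ≤ ∑ i, Dstar i * (if h s i = y i then (1:ℝ) else 0) := by
    intro s _
    apply Finset.sum_nonneg
    intro i _
    apply mul_nonneg (hDstarnn i)
    split <;> norm_num
  -- bound on -log(1-γ)
  have hloggamma : -Real.log (1-γ) ≤ γ + γ^2 := by
    have h1 : 1 + (γ+γ^2)/2 ≤ Real.exp ((γ+γ^2)/2) := by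
      linarith [Real.add_one_le_exp ((γ+γ^2)/2)]
    have h2 : (1 + (γ+γ^2)/2)^2 ≤ Real.exp ((γ+γ^2)/2)^2 :=
      pow_le_pow_left₀ (by positivity) h1 2
    have h3 : Real.exp ((γ+γ^2)/2)^2 = Real.exp (γ+γ^2) := by
      rw [sq, ← Real.exp_add]
      ring_nf
    have h4 : 1/(1-γ) ≤ (1 + (γ+γ^2)/2)^2 := by
      rw [div_le_iff₀ h1γ]
      nlinarith [hγ0, hγ4, sq_nonneg γ, mul_pos hγ0 hγ0,
        mul_le_mul_of_nonneg_left hγ4 hγ0.le,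
        mul_le_mul_of_nonneg_left (mul_le_mul_of_nonneg_left hγ4 hγ0.le) hγ0.le]
    have h5 : 1/(1-γ) ≤ Real.exp (γ+γ^2) := by
      rw [← h3]
      linarith
    have h6 : Real.log (1/(1-γ)) ≤ γ+γ^2 := by
      rw [Real.log_le_iff_le_exp (by positivity)]
      exact h5
    rw [Real.log_div one_ne_zero h1γ.ne', Real.log_one] at h6
    linarith
  have hlogneg : 0 ≤ -Real.log (1-γ) := by
    have : Real.log (1-γ) ≤ 0 := Real.log_nonpos (by linarith) (by linarith)
    linarith
  -- putting the sum bound together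
  have hGsum : ∑ s ∈ Finset.range T,
      (Real.log (∑ j, D s j * (if h s j = y j then 1 - γ else 1))
        - Real.log (1-γ) * (∑ i, Dstar i * (if h s i = y i then 1 else 0)))
      ≤ (T:ℝ) * (-(γ * (1/2 + γ))) + (γ + γ^2) * ((T:ℝ)/2) := by
    rw [Finset.sum_sub_distrib]
    have hc2 : -Real.log (1-γ) * (∑ s ∈ Finset.range T,
        (∑ i, Dstar i * (if h s i = y i then (1:ℝ) else 0))) ≤ (γ + γ^2) * ((T:ℝ)/2) := by
      calc -Real.log (1-γ) * (∑ s ∈ Finset.range T,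
            (∑ i, Dstar i * (if h s i = y i then (1:ℝ) else 0)))
          ≤ -Real.log (1-γ) * ((T:ℝ)/2) := mul_le_mul_of_nonneg_left hcsum hlogneg
        _ ≤ (γ + γ^2) * ((T:ℝ)/2) := mul_le_mul_of_nonneg_right hloggamma (by positivity)
    rw [← Finset.mul_sum] at *
    linarith [hsumlogZ, hc2]
  -- bound on the initial potential
  have hinitb : Real.log ((n:ℝ)/b) ≤ Real.log (1/ε'') := by
    apply Real.log_le_log (by positivity)
    rw [div_le_div_iff₀ hb0 hε''0]
    linarith [hbn]
  -- final contradiction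
  have hfinal : 0 ≤ Real.log (1/ε'') + ((T:ℝ) * (-(γ * (1/2 + γ))) + (γ + γ^2) * ((T:ℝ)/2)) := by
    linarith [htele, hGsum, hinitb]
  have hTnn : (0:ℝ) ≤ T := Nat.cast_nonneg T
  nlinarith [hfinal, hTγ]
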